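/- Fix a time step k and abstract weight functions a, b : Fin n → Fin n → ℝ satisfying the column-sum conditions: for every i ∈ R k, ∑_{j ∈ R k} a j i = 1, and for every i ∈ D k, ∑_{j ∈ R k} b j i = 1. Suppose the state x : ℕ → Fin n → ℝ satisfies: x (k+1) j = ∑_{i ∈ R k} a j i · x k i + ∑_{i ∈ D k} b j i · (x k i − x̂ k i) for every j ∈ R k, and x (k+1) j = x̂ (k+1) j for every j ∈ J k. Then ∑_{j ∈ V (k+1)} x (k+1) j = ∑_{j ∈ R k} x k j + ∑_{j ∈ D k} (x k j − x̂ k j) + ∑_{j ∈ J k} x̂ (k+1) j (the one-step mass decomposition used in the inductive step of Theorem 1). -/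
import Mathlib


/-- One-step mass decomposition used in the inductive step of Theorem 1 of the
OpenRC paper: if the mixing weights have column sums equal to 1 over the
remaining agents, then the total mass of the active agents at time k+1
decomposes into the remaining mass, the departing surplus, and the joining
masses. -/
theorem openRC_one_step_mass_decomposition {n : ℕ}
    (V : ℕ → Finset (Fin n)) (xhat : ℕ → Fin n → ℝ)
    (x : ℕ → Fin n → ℝ) (k : ℕ)
    (a b : Fin n → Fin n → ℝ)
    -- column-sum conditions
    (ha : ∀ i ∈ V k ∩ V (k + 1), ∑ j ∈ V k ∩ V (k + 1), a j i = 1)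
    (hb : ∀ i ∈ V k \ V (k + 1), ∑ j ∈ V k ∩ V (k + 1), b j i = 1)
    -- the update
    (hrem : ∀ j ∈ V k ∩ V (k + 1),
      x (k + 1) j = ∑ i ∈ V k ∩ V (k + 1), a j i * x k i
        + ∑ i ∈ V k \ V (k + 1), b j i * (x k i - xhat k i))
    (hjoin : ∀ j ∈ V (k + 1) \ V k, x (k + 1) j = xhat (k + 1) j) :
    ∑ j ∈ V (k + 1), x (k + 1) j =
      ∑ j ∈ V k ∩ V (k + 1), x k j
      + ∑ j ∈ V k \ V (k + 1), (x k j - xhat k j)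
      + ∑ j ∈ V (k + 1) \ V k, xhat (k + 1) j := by
  have hsplit : V (k + 1) = (V k ∩ V (k + 1)) ∪ (V (k + 1) \ V k) := by
    ext j; simp [Finset.mem_inter, Finset.mem_union, Finset.mem_sdiff]; tauto
  have hdisj : Disjoint (V k ∩ V (k + 1)) (V (k + 1) \ V k) := by
    rw [Finset.disjoint_left]
    intro j hj hj'
    simp [Finset.mem_inter, Finset.mem_sdiff] at hj hj'
    exact hj'.2 hj.1
  conv_lhs => rw [hsplit]
  rw [Finset.sum_union hdisj, Finset.sum_congr rfl hrem,
    Finset.sum_congr rfl hjoin, Finset.sum_add_distrib,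
    Finset.sum_comm, Finset.sum_comm (s := V k ∩ V (k + 1)) (t := V k \ V (k + 1))]
  congr 1
  congr 1
  · refine Finset.sum_congr rfl fun i hi => ?_
    rw [← Finset.sum_mul, ha i hi, one_mul]
  · refine Finset.sum_congr rfl fun i hi => ?_
    rw [← Finset.sum_mul, hb i hi, one_mul]
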